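/- arXiv:1901.09849 — 3 statements merged into one kernel-verified Lean document; each statement's English description precedes it below -/
import Mathlib

section
/- The adaptive Gumbel family is identifiable: for α, α' > 0, if σ_α(x) = σ_{α'}(x) for all real x, then α = α'. -/
noncomputable def adaGumbel (α x : ℝ) : ℝ := 1 - (1 + α * Real.exp x) ^ (-(1/α))
theorem stmt5 (α α' : ℝ) (hα : 0 < α) (hα' : 0 < α')
    (h : ∀ x : ℝ, adaGumbel α x = adaGumbel α' x) : α = α' := by
  have key : ∀ t : ℝ, 0 < t → α' * Real.log (1 + α * t) = α * Real.log (1 + α' * t) := by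
    intro t ht
    have hx := h (Real.log t)
    rw [adaGumbel, adaGumbel, Real.exp_log ht] at hx
    have h1 : (0:ℝ) < 1 + α * t := by positivity
    have h2 : (0:ℝ) < 1 + α' * t := by positivity
    have heq : (1 + α * t) ^ (-(1/α)) = (1 + α' * t) ^ (-(1/α')) := by linarith
    have hl := congrArg Real.log heq
    rw [Real.log_rpow h1, Real.log_rpow h2] at hl
    field_simp at hl
    rw [mul_comm t α'] at hl; nlinarith [hl]
  -- derivatives at t = 1
  have hlin : ∀ c : ℝ, HasDerivAt (fun t : ℝ => 1 + c * t) c 1 := by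
    intro c
    simpa using ((hasDerivAt_id (1:ℝ)).const_mul c).const_add 1
  have hd1 : HasDerivAt (fun t : ℝ => α' * Real.log (1 + α * t))
      (α' * ((1 + α * 1)⁻¹ * α)) 1 := by
    have hlog := (Real.hasDerivAt_log (by positivity : (1:ℝ) + α * 1 ≠ 0)).comp 1 (hlin α)
    exact hlog.const_mul α'
  have hd2 : HasDerivAt (fun t : ℝ => α * Real.log (1 + α' * t))
      (α * ((1 + α' * 1)⁻¹ * α')) 1 := by
    have hlog := (Real.hasDerivAt_log (by positivity : (1:ℝ) + α' * 1 ≠ 0)).comp 1 (hlin α')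
    exact hlog.const_mul α
  have hev : (fun t : ℝ => α' * Real.log (1 + α * t)) =ᶠ[nhds (1:ℝ)]
      (fun t : ℝ => α * Real.log (1 + α' * t)) := by
    filter_upwards [eventually_gt_nhds (by norm_num : (0:ℝ) < 1)] with t ht
    exact key t ht
  have huniq := hd1.unique (hd2.congr_of_eventuallyEq hev)
  have hA : (0:ℝ) < 1 + α := by linarith
  have hA' : (0:ℝ) < 1 + α' := by linarith
  field_simp at huniq
  nlinarith [huniq, mul_pos hα hα']
end

section
/- For α, α' > 0, if (1/α)·log(1 + α z) = (1/α')·log(1 + α' z) for all z > 0, then α = α'. -/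
theorem stmt6 (α α' : ℝ) (hα : 0 < α) (hα' : 0 < α')
    (h : ∀ z : ℝ, 0 < z → (1/α) * Real.log (1 + α * z) = (1/α') * Real.log (1 + α' * z)) :
    α = α' := by
  have key : ∀ (β : ℝ), 0 < β →
      HasDerivAt (fun z : ℝ => (1/β) * Real.log (1 + β * z)) (1/(1+β)) 1 := by
    intro β hβ
    have h1 : HasDerivAt (fun z : ℝ => 1 + β * z) β 1 := by
      simpa using ((hasDerivAt_id (1:ℝ)).const_mul β).const_add 1
    have h2 := (h1.log (by nlinarith)).const_mul (1/β)
    convert h2 using 1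
    · rfl
    · rfl
    · field_simp
  have e : deriv (fun z : ℝ => (1/α) * Real.log (1 + α * z)) 1
      = deriv (fun z : ℝ => (1/α') * Real.log (1 + α' * z)) 1 := by
    apply Filter.EventuallyEq.deriv_eq
    filter_upwards [eventually_gt_nhds (by norm_num : (0:ℝ) < 1)] with z hz using h z hz
  rw [(key α hα).deriv, (key α' hα').deriv] at e
  field_simp at e
  linarith
end

section
/- The Bernoulli regression model with adaptive Gumbel link is identifiable in (η, α): if for all real η, σ_α(η) = σ_{α'}(η) where σ_α(η) = 1 - (1 + α e^η)^{-1/α}, then the success-probability maps coincide only when α = α'; moreover for fixed α the map η ↦ σ_α(η) is injective. -/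
theorem stmt19 :
    (∀ α α' : ℝ, 0 < α → 0 < α' →
      (∀ η : ℝ, adaGumbel α η = adaGumbel α' η) → α = α') ∧
    (∀ α : ℝ, 0 < α → Function.Injective (adaGumbel α)) := by
  constructor
  · intro α α' hα hα' h
    have hb : ∀ (β η : ℝ), 0 < β → (0:ℝ) < 1 + β * Real.exp η := by
      intro β η hβ
      have := Real.exp_pos η
      positivity
    have hlog : ∀ η : ℝ, α' * Real.log (1 + α * Real.exp η)
        = α * Real.log (1 + α' * Real.exp η) := by
      intro η
      have h1 := h η
      unfold adaGumbel at h1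
      have h2 : (1 + α * Real.exp η) ^ (-(1/α)) = (1 + α' * Real.exp η) ^ (-(1/α')) := by
        linarith
      have h3 := congrArg Real.log h2
      rw [Real.log_rpow (hb α η hα), Real.log_rpow (hb α' η hα')] at h3
      have hα0 : α ≠ 0 := ne_of_gt hα
      have hα'0 : α' ≠ 0 := ne_of_gt hα'
      field_simp at h3
      rw [mul_comm (Real.exp η) α'] at h3
      linarith
    have hd1 : HasDerivAt (fun η => α' * Real.log (1 + α * Real.exp η))
        (α' * (α * Real.exp 0 / (1 + α * Real.exp 0))) 0 := by
      have h1 : HasDerivAt (fun η : ℝ => 1 + α * Real.exp η) (α * Real.exp 0) 0 := by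
        simpa using ((Real.hasDerivAt_exp 0).const_mul α).const_add 1
      exact (h1.log (ne_of_gt (hb α 0 hα))).const_mul α'
    have hd2 : HasDerivAt (fun η => α * Real.log (1 + α' * Real.exp η))
        (α * (α' * Real.exp 0 / (1 + α' * Real.exp 0))) 0 := by
      have h1 : HasDerivAt (fun η : ℝ => 1 + α' * Real.exp η) (α' * Real.exp 0) 0 := by
        simpa using ((Real.hasDerivAt_exp 0).const_mul α').const_add 1
      exact (h1.log (ne_of_gt (hb α' 0 hα'))).const_mul α
    have heq : (fun η => α' * Real.log (1 + α * Real.exp η)) =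
        (fun η => α * Real.log (1 + α' * Real.exp η)) := funext hlog
    have huniq := hd1.unique (heq ▸ hd2)
    rw [Real.exp_zero] at huniq
    have h1 : (0:ℝ) < 1 + α * 1 := by linarith
    have h2 : (0:ℝ) < 1 + α' * 1 := by linarith
    field_simp at huniq
    have key : α * α' * (α' - α) = 0 := by linear_combination (α * α') * huniq
    have hne : α * α' ≠ 0 := by positivity
    have h0 : α' - α = 0 := by
      rcases mul_eq_zero.mp key with h'|h'
      · exact absurd h' hne
      · exact h'
    linarith
  · intro α hα
    have hmono : StrictMono (adaGumbel α) := by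
      intro x y hxy
      unfold adaGumbel
      have hbx : (0:ℝ) < 1 + α * Real.exp x := by
        have := Real.exp_pos x; positivity
      have hlt : 1 + α * Real.exp x < 1 + α * Real.exp y := by
        have := Real.exp_lt_exp.mpr hxy
        nlinarith
      have hneg : -(1/α) < 0 := by
        have : 0 < 1/α := by positivity
        linarith
      have h1 : (1 + α * Real.exp y) ^ (-(1/α)) < (1 + α * Real.exp x) ^ (-(1/α)) :=
        Real.rpow_lt_rpow_of_neg hbx hlt hneg
      linarith
    exact hmono.injective
end
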